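/- Let l ≥ 2 be a natural number and set N = 4l. Work in Λ(ℂ^N), and set ω₀ := Σ_{j=1}^{2l−1} e_{2j−1}∧e_{2j}. Then: (a) for every vector v in the linear span of the first 4l−1 standard basis vectors of ℂ^{4l}, if ι(v)∧ω₀ = 0 then v = 0; (b) consequently, if λ_{ij} ∈ ℂ (1 ≤ i < j ≤ 4l) are scalars such that (Σ_{i=1}^{4l−1} λ_{i,4l}·e_i) ∧ ω₀ = 0, then λ_{i,4l} = 0 for all 1 ≤ i ≤ 4l−1, and the 2-form ω̃ := Σ_{1≤i<j≤4l} λ_{ij}·e_i∧e_j satisfies ω̃^{2l} = 0. -/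
import Mathlib


/-- The 1-based `i`-th standard basis vector of `ℂ^N` (zero if `i` is out of range). -/
def sv (N : ℕ) (i : ℕ) : Fin N → ℂ :=
  fun k => if (k : ℕ) + 1 = i then (1 : ℂ) else 0

/-- The 1-based `i`-th standard basis vector of `ℂ^N`, viewed inside the
exterior algebra `Λ(ℂ^N)` via the canonical inclusion `ι`. -/
noncomputable def e (N : ℕ) (i : ℕ) : ExteriorAlgebra ℂ (Fin N → ℂ) :=
  ExteriorAlgebra.ι ℂ (sv N i)

open ExteriorAlgebra

/-- Ordered product of basis wedge factors indexed by a list. -/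
noncomputable def PL (N : ℕ) (L : List ℕ) : ExteriorAlgebra ℂ (Fin N → ℂ) :=
  (L.map (e N)).prod

lemma PL_nil (N : ℕ) : PL N [] = 1 := rfl

lemma PL_append (N : ℕ) (L₁ L₂ : List ℕ) : PL N (L₁ ++ L₂) = PL N L₁ * PL N L₂ := by
  simp [PL]

lemma PL_pair (N i j : ℕ) : PL N [i, j] = e N i * e N j := by
  simp [PL]

lemma PL_eq_iotaMulti (N : ℕ) (L : List ℕ) :
    PL N L = ιMulti ℂ L.length (fun t => sv N (L.get t)) := by
  induction L with
  | nil => simp [PL, ιMulti_zero_apply]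
  | cons a L ih =>
      show _ = ιMulti ℂ (L.length + 1)
        (fun t : Fin (L.length + 1) => sv N ((a :: L).get t))
      rw [ιMulti_succ_apply]
      rw [PL, List.map_cons, List.prod_cons, ← PL, ih]
      congr 1

lemma PL_eq_zero (N m : ℕ) (L : List ℕ) (hL : ∀ i ∈ L, i ∈ Finset.Icc 1 m)
    (hlen : m < L.length) : PL N L = 0 := by
  rw [PL_eq_iotaMulti]
  apply AlternatingMap.map_eq_zero_of_not_injective
  intro hinj
  obtain ⟨t, -, t', -, hne, heq⟩ :=
    Finset.exists_ne_map_eq_of_card_lt_of_maps_to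
      (s := (Finset.univ : Finset (Fin L.length))) (t := Finset.Icc 1 m)
      (f := fun t : Fin L.length => L.get t)
      (by simpa [Nat.card_Icc] using hlen)
      (fun a _ => hL _ (by simpa using List.get_mem L a.1 a.2))
  exact hne (hinj (show sv N (L.get t) = sv N (L.get t') by rw [heq]))

/-- Span of products of `n` basis wedge factors with indices in `[1, m]`. -/
noncomputable def VV (N n m : ℕ) : Submodule ℂ (ExteriorAlgebra ℂ (Fin N → ℂ)) :=
  Submodule.span ℂ
    {x | ∃ L : List ℕ, L.length = n ∧ (∀ i ∈ L, i ∈ Finset.Icc 1 m) ∧ x = PL N L}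

lemma VV_mul {N a b m : ℕ} {x y : ExteriorAlgebra ℂ (Fin N → ℂ)}
    (hx : x ∈ VV N a m) (hy : y ∈ VV N b m) : x * y ∈ VV N (a + b) m := by
  have h := Submodule.mul_mem_mul hx hy
  have hle : VV N a m * VV N b m ≤ VV N (a + b) m := by
    rw [VV, VV, Submodule.span_mul_span]
    apply Submodule.span_le.2
    rintro z hz
    rw [Set.mem_mul] at hz
    obtain ⟨u, ⟨L₁, h1, h2, rfl⟩, w, ⟨L₂, h3, h4, rfl⟩, rfl⟩ := hz
    refine Submodule.subset_span ⟨L₁ ++ L₂, by simp [h1, h3], ?_, (PL_append N L₁ L₂).symm⟩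
    intro i hi
    rcases List.mem_append.1 hi with h | h
    · exact h2 i h
    · exact h4 i h
  exact hle h

lemma VV_one {N m : ℕ} : (1 : ExteriorAlgebra ℂ (Fin N → ℂ)) ∈ VV N 0 m :=
  Submodule.subset_span ⟨[], rfl, by simp, (PL_nil N).symm⟩

lemma VV_pow {N m : ℕ} {x : ExteriorAlgebra ℂ (Fin N → ℂ)} (hx : x ∈ VV N 2 m) (n : ℕ) :
    x ^ n ∈ VV N (2 * n) m := by
  induction n with
  | zero =>
      rw [pow_zero, show 2 * 0 = 0 from rfl]
      exact VV_one
  | succ n ih =>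
      have h2 : 2 * (n + 1) = 2 * n + 2 := by omega
      rw [pow_succ, h2]
      exact VV_mul ih hx

lemma VV_top_eq_zero {N m : ℕ} {x : ExteriorAlgebra ℂ (Fin N → ℂ)} {n : ℕ}
    (hx : x ∈ VV N n m) (h : m < n) : x = 0 := by
  have : VV N n m ≤ ⊥ := by
    apply Submodule.span_le.2
    rintro z ⟨L, h1, h2, rfl⟩
    simp [PL_eq_zero N m L h2 (h1 ▸ h)]
  simpa using this hx

lemma triple_mul {N : ℕ} (x y z : Fin N → ℂ) :
    ExteriorAlgebra.ι ℂ x * (ExteriorAlgebra.ι ℂ y * ExteriorAlgebra.ι ℂ z) =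
      ιMulti ℂ 3 ![x, y, z] := by
  simp [ιMulti_apply, List.ofFn_succ, mul_assoc]

set_option maxHeartbeats 2000000 in
/-- Key computation for part (a): a suitable alternating functional extracts the
`(i₀-1)`-th coordinate of `v` from `ι v ∧ ω₀`. -/
lemma keyA (l : ℕ) (hl : 2 ≤ l) (i₀ : ℕ) (h1 : 1 ≤ i₀) (h2 : i₀ ≤ 4 * l - 1)
    (v : Fin (4 * l) → ℂ)
    (hv : ExteriorAlgebra.ι ℂ v *
      (∑ j ∈ Finset.Icc 1 (2 * l - 1), e (4 * l) (2 * j - 1) * e (4 * l) (2 * j)) = 0) :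
    v ⟨i₀ - 1, by omega⟩ = 0 := by
  set j₀ : ℕ := if i₀ ≤ 2 then 2 else 1 with hj₀
  have hj₀1 : 1 ≤ j₀ := by by_cases h : i₀ ≤ 2 <;> simp [hj₀, h]
  have hj₀2 : j₀ ≤ 2 * l - 1 := by by_cases h : i₀ ≤ 2 <;> simp [hj₀, h] <;> omega
  have hi₀a : i₀ ≠ 2 * j₀ - 1 := by by_cases h : i₀ ≤ 2 <;> simp [hj₀, h] <;> omega
  have hi₀b : i₀ ≠ 2 * j₀ := by by_cases h : i₀ ≤ 2 <;> simp [hj₀, h] <;> omega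
  set c : Fin 3 → Fin (4 * l) :=
    ![⟨i₀ - 1, by omega⟩, ⟨2 * j₀ - 2, by omega⟩, ⟨2 * j₀ - 1, by omega⟩] with hc
  set g : (Fin (4 * l) → ℂ) [⋀^Fin 3]→ₗ[ℂ] ℂ :=
    (Matrix.detRowAlternating : (Fin 3 → ℂ) [⋀^Fin 3]→ₗ[ℂ] ℂ).compLinearMap
      (LinearMap.funLeft ℂ ℂ c) with hg
  set F : ∀ n : ℕ, (Fin (4 * l) → ℂ) [⋀^Fin n]→ₗ[ℂ] ℂ :=
    fun n => match n with
      | 3 => g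
      | _ => 0 with hF
  set φ := liftAlternating (R := ℂ) F with hφ
  have e00 : ((c 0 : Fin (4 * l)) : ℕ) = i₀ - 1 := by simp [hc]
  have e01 : ((c 1 : Fin (4 * l)) : ℕ) = 2 * j₀ - 2 := by simp [hc]
  have e02 : ((c 2 : Fin (4 * l)) : ℕ) = 2 * j₀ - 1 := by simp [hc]
  have hc0 : c 0 = ⟨i₀ - 1, by omega⟩ := by simp [hc]
  have hmain : φ (ExteriorAlgebra.ι ℂ v *
      (∑ j ∈ Finset.Icc 1 (2 * l - 1), e (4 * l) (2 * j - 1) * e (4 * l) (2 * j)))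
      = v ⟨i₀ - 1, by omega⟩ := by
    rw [Finset.mul_sum, map_sum]
    have hterm : ∀ j ∈ Finset.Icc 1 (2 * l - 1),
        φ (ExteriorAlgebra.ι ℂ v * (e (4 * l) (2 * j - 1) * e (4 * l) (2 * j))) =
        Matrix.det (Matrix.of fun p q =>
          (![v, sv (4 * l) (2 * j - 1), sv (4 * l) (2 * j)] p) (c q)) := by
      intro j hj
      rw [e, e, triple_mul, hφ, liftAlternating_apply_ιMulti]
      show g ![v, sv (4 * l) (2 * j - 1), sv (4 * l) (2 * j)] = _
      rw [hg, AlternatingMap.compLinearMap_apply]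
      rfl
    rw [Finset.sum_congr rfl hterm]
    rw [Finset.sum_eq_single j₀]
    · -- the j₀ term
      rw [Matrix.det_fin_three]
      simp only [Matrix.of_apply, Matrix.cons_val_zero, Matrix.cons_val_one, Matrix.head_cons,
        Matrix.cons_val_two, Matrix.tail_cons, sv, e00, e01, e02]
      rw [if_pos (by omega), if_pos (by omega), if_neg (by omega), if_neg (by omega),
        if_neg (by omega), if_neg (by omega)]
      simp only [mul_one, mul_zero, zero_mul, one_mul, sub_zero, add_zero, zero_add]
      exact congrArg v hc0
    · -- other terms vanish
      intro j hj hne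
      simp only [Finset.mem_Icc] at hj
      rw [Matrix.det_fin_three]
      simp only [Matrix.of_apply, Matrix.cons_val_zero, Matrix.cons_val_one, Matrix.head_cons,
        Matrix.cons_val_two, Matrix.tail_cons, sv, e00, e01, e02]
      rw [if_neg (by omega), if_neg (by omega), if_neg (by omega), if_neg (by omega)]
      ring
    · intro h
      exact absurd (Finset.mem_Icc.2 ⟨hj₀1, hj₀2⟩) h
  rw [hv, map_zero] at hmain
  exact hmain.symm

/-- in `Λ(ℂ^{4l})` (`l ≥ 2`), with `ω₀ := Σ_{j=1}^{2l−1} e_{2j−1}∧e_{2j}`: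
(a) wedging with `ω₀` is injective on the span of the first `4l−1` standard basis
vectors; (b) consequently, if `(Σ_{i=1}^{4l−1} λ_{i,4l}·e_i) ∧ ω₀ = 0` then all
`λ_{i,4l} = 0` (`1 ≤ i ≤ 4l−1`) and `ω̃ := Σ_{1≤i<j≤4l} λ_{ij}·e_i∧e_j` satisfies
`ω̃^{2l} = 0`. -/
theorem stmt_13 (l : ℕ) (hl : 2 ≤ l) :
    (∀ v : Fin (4 * l) → ℂ,
      v ∈ Submodule.span ℂ {x | ∃ i, 1 ≤ i ∧ i ≤ 4 * l - 1 ∧ x = sv (4 * l) i} →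
      ExteriorAlgebra.ι ℂ v *
        (∑ j ∈ Finset.Icc 1 (2 * l - 1), e (4 * l) (2 * j - 1) * e (4 * l) (2 * j)) = 0 →
      v = 0) ∧
    (∀ lam : ℕ → ℕ → ℂ,
      (∑ i ∈ Finset.Icc 1 (4 * l - 1), lam i (4 * l) • e (4 * l) i) *
        (∑ j ∈ Finset.Icc 1 (2 * l - 1), e (4 * l) (2 * j - 1) * e (4 * l) (2 * j)) = 0 →
      (∀ i, 1 ≤ i → i ≤ 4 * l - 1 → lam i (4 * l) = 0) ∧
      (∑ i ∈ Finset.Icc 1 (4 * l), ∑ j ∈ Finset.Icc (i + 1) (4 * l),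
          lam i j • (e (4 * l) i * e (4 * l) j)) ^ (2 * l) = 0) := by
  have partA : ∀ v : Fin (4 * l) → ℂ,
      v ∈ Submodule.span ℂ {x | ∃ i, 1 ≤ i ∧ i ≤ 4 * l - 1 ∧ x = sv (4 * l) i} →
      ExteriorAlgebra.ι ℂ v *
        (∑ j ∈ Finset.Icc 1 (2 * l - 1), e (4 * l) (2 * j - 1) * e (4 * l) (2 * j)) = 0 →
      v = 0 := by
    intro v hspan hv
    funext p
    by_cases hp : (p : ℕ) ≤ 4 * l - 2
    · have hk := keyA l hl ((p : ℕ) + 1) (by omega) (by omega) v hv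
      have h' : (⟨(p : ℕ) + 1 - 1, by omega⟩ : Fin (4 * l)) = p := by
        apply Fin.ext; simp
      rw [h'] at hk
      exact hk
    · have hlast : (p : ℕ) = 4 * l - 1 := by have := p.isLt; omega
      have hker : Submodule.span ℂ {x | ∃ i, 1 ≤ i ∧ i ≤ 4 * l - 1 ∧ x = sv (4 * l) i} ≤
          LinearMap.ker (LinearMap.proj (R := ℂ) (φ := fun _ : Fin (4 * l) => ℂ) p) := by
        apply Submodule.span_le.2
        rintro x ⟨i, hi1, hi2, rfl⟩
        simp only [SetLike.mem_coe, LinearMap.mem_ker, LinearMap.proj_apply]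
        simp only [sv]
        rw [if_neg (by omega)]
      have := hker hspan
      simpa using this
  refine ⟨partA, ?_⟩
  intro lam hlam
  have hzero : ∀ i, 1 ≤ i → i ≤ 4 * l - 1 → lam i (4 * l) = 0 := by
    have hv : ExteriorAlgebra.ι ℂ
        (∑ i ∈ Finset.Icc 1 (4 * l - 1), lam i (4 * l) • sv (4 * l) i) *
        (∑ j ∈ Finset.Icc 1 (2 * l - 1), e (4 * l) (2 * j - 1) * e (4 * l) (2 * j)) = 0 := by
      rw [map_sum]
      simp only [map_smul]
      exact hlam
    have hspan : (∑ i ∈ Finset.Icc 1 (4 * l - 1), lam i (4 * l) • sv (4 * l) i) ∈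
        Submodule.span ℂ {x | ∃ i, 1 ≤ i ∧ i ≤ 4 * l - 1 ∧ x = sv (4 * l) i} := by
      apply Submodule.sum_mem
      intro i hi
      simp only [Finset.mem_Icc] at hi
      exact Submodule.smul_mem _ _ (Submodule.subset_span ⟨i, hi.1, hi.2, rfl⟩)
    have hzv := partA _ hspan hv
    intro i hi1 hi2
    have hcoord := congrFun hzv ⟨i - 1, by omega⟩
    simp only [Finset.sum_apply, Pi.smul_apply, Pi.zero_apply, smul_eq_mul, sv] at hcoord
    have hsum : (∑ k ∈ Finset.Icc 1 (4 * l - 1),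
        lam k (4 * l) * (if i - 1 + 1 = k then (1 : ℂ) else 0)) = lam i (4 * l) := by
      rw [Finset.sum_eq_single i]
      · rw [if_pos (by omega), mul_one]
      · intro k hk hne
        rw [if_neg (by omega), mul_zero]
      · intro h
        exact absurd (Finset.mem_Icc.2 ⟨hi1, hi2⟩) h
    rw [hsum] at hcoord
    exact hcoord
  refine ⟨hzero, ?_⟩
  have hmem : (∑ i ∈ Finset.Icc 1 (4 * l), ∑ j ∈ Finset.Icc (i + 1) (4 * l),
      lam i j • (e (4 * l) i * e (4 * l) j)) ∈ VV (4 * l) 2 (4 * l - 1) := by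
    apply Submodule.sum_mem
    intro i hi
    apply Submodule.sum_mem
    intro j hj
    simp only [Finset.mem_Icc] at hi hj
    by_cases hj4 : j = 4 * l
    · have hz : lam i j = 0 := by rw [hj4]; exact hzero i hi.1 (by omega)
      rw [hz, zero_smul]
      exact Submodule.zero_mem _
    · apply Submodule.smul_mem
      refine Submodule.subset_span ⟨[i, j], rfl, ?_, (PL_pair _ i j).symm⟩
      intro k hk
      simp only [List.mem_cons, List.mem_singleton, List.not_mem_nil, or_false] at hk
      rcases hk with rfl | rfl <;> (rw [Finset.mem_Icc]; omega)
  have hpow := VV_pow hmem (2 * l)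
  exact VV_top_eq_zero hpow (by omega)
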